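/- Let k ≠ 0 be a real constant. Let w : ℝ² → ℝ be differentiable in x₁ with ∂w/∂x₁ differentiable in x₂, satisfying the sine-Gordon equation ∂²w/∂x₂∂x₁ = sin w on ℝ². Let u : ℝ² → ℝ be differentiable satisfying the Bäcklund relations ∂u/∂x₂ = k⁻¹ sin(u − w) and ∂u/∂x₁ = ∂w/∂x₁ + k sin u on ℝ², and suppose cos(u − w) ≥ 0 everywhere. Then u satisfies ∂²u/∂x₂∂x₁ = √(1 − k² (∂u/∂x₂)²) · sin u on ℝ² (in particular 1 − k²(∂u/∂x₂)² ≥ 0 everywhere, so the square root is real). -/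

import Mathlib

/-- The Bäcklund relations `u_{x₂} = k⁻¹ sin(u - w)`,
`u_{x₁} = w_{x₁} + k sin u` map a solution `w` of the sine-Gordon equation
`w_{x₁x₂} = sin w` to a solution `u` of `u_{x₁x₂} = √(1 - k² u_{x₂}²) · sin u`,
provided `cos (u - w) ≥ 0` everywhere. -/
theorem backlund_transformation
    (k : ℝ) (hk : k ≠ 0) (w u : ℝ × ℝ → ℝ)
    (hw1 : ∀ x₁ x₂ : ℝ, DifferentiableAt ℝ (fun s => w (s, x₂)) x₁)
    (hw12 : ∀ x₁ x₂ : ℝ,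
      DifferentiableAt ℝ (fun t => deriv (fun s => w (s, t)) x₁) x₂)
    (hsg : ∀ x₁ x₂ : ℝ,
      deriv (fun t => deriv (fun s => w (s, t)) x₁) x₂ = Real.sin (w (x₁, x₂)))
    (hu : Differentiable ℝ u)
    (hb2 : ∀ x₁ x₂ : ℝ,
      deriv (fun t => u (x₁, t)) x₂ = k⁻¹ * Real.sin (u (x₁, x₂) - w (x₁, x₂)))
    (hb1 : ∀ x₁ x₂ : ℝ,
      deriv (fun s => u (s, x₂)) x₁ =
        deriv (fun s => w (s, x₂)) x₁ + k * Real.sin (u (x₁, x₂)))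
    (hcos : ∀ x₁ x₂ : ℝ, 0 ≤ Real.cos (u (x₁, x₂) - w (x₁, x₂))) :
    ∀ x₁ x₂ : ℝ,
      0 ≤ 1 - k ^ 2 * (deriv (fun t => u (x₁, t)) x₂) ^ 2 ∧
      deriv (fun t => deriv (fun s => u (s, t)) x₁) x₂ =
        Real.sqrt (1 - k ^ 2 * (deriv (fun t => u (x₁, t)) x₂) ^ 2) *
          Real.sin (u (x₁, x₂)) := by
  intro x₁ x₂
  set a := u (x₁, x₂)
  set b := w (x₁, x₂)
  have hroot : 1 - k ^ 2 * (deriv (fun t => u (x₁, t)) x₂) ^ 2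
      = Real.cos (a - b) ^ 2 := by
    rw [hb2]
    have h1 : Real.sin (a - b) ^ 2 + Real.cos (a - b) ^ 2 = 1 :=
      Real.sin_sq_add_cos_sq _
    field_simp
    linarith
  constructor
  · rw [hroot]; positivity
  -- differentiability of t ↦ u (x₁, t)
  have hut : HasDerivAt (fun t => u (x₁, t)) (k⁻¹ * Real.sin (a - b)) x₂ := by
    have hd : DifferentiableAt ℝ (fun t => u (x₁, t)) x₂ := by
      exact (hu (x₁, x₂)).comp x₂
        ((differentiableAt_const x₁).prodMk differentiableAt_id)
    have := hd.hasDerivAt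
    rwa [hb2 x₁ x₂] at this
  have hsin : HasDerivAt (fun t => k * Real.sin (u (x₁, t)))
      (k * (Real.cos a * (k⁻¹ * Real.sin (a - b)))) x₂ :=
    (hut.sin).const_mul k
  have hwpart : HasDerivAt (fun t => deriv (fun s => w (s, t)) x₁)
      (Real.sin b) x₂ := by
    have := (hw12 x₁ x₂).hasDerivAt
    rwa [hsg x₁ x₂] at this
  have hsum : HasDerivAt
      (fun t => deriv (fun s => w (s, t)) x₁ + k * Real.sin (u (x₁, t)))
      (Real.sin b + k * (Real.cos a * (k⁻¹ * Real.sin (a - b)))) x₂ :=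
    hwpart.add hsin
  have hfun : (fun t => deriv (fun s => u (s, t)) x₁)
      = fun t => deriv (fun s => w (s, t)) x₁ + k * Real.sin (u (x₁, t)) :=
    funext fun t => hb1 x₁ t
  have hderiv : deriv (fun t => deriv (fun s => u (s, t)) x₁) x₂
      = Real.sin b + k * (Real.cos a * (k⁻¹ * Real.sin (a - b))) := by
    rw [hfun]; exact hsum.deriv
  rw [hderiv, hroot, Real.sqrt_sq (hcos x₁ x₂)]
  have h1 : Real.sin a ^ 2 + Real.cos a ^ 2 = 1 := Real.sin_sq_add_cos_sq a
  rw [Real.sin_sub, Real.cos_sub]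
  field_simp
  linear_combination (-1 : ℝ) * Real.sin b * h1
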